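/- Every weighted graph G=(V,p,μ) satisfies CD(−1,2): for every function f:V→ℝ and every x∈V, Γ₂f(x) ≥ (1/2)·(Δf(x))² − Γf(x). -/
import Mathlib


/-- A weighted graph `G = (V, p, μ)`: a nonnegative kernel `p` and a positive
measure `μ` on the vertex set `V`, such that `G` is locally finite, `p` is a
Markov kernel, and `G` is connected.  Vertices `x, y` are neighbours (`x ∼ y`)
iff `0 < p x y`. -/
structure WeightedGraph (V : Type*) where
  p : V → V → ℝ
  μ : V → ℝ
  p_nonneg : ∀ x y, 0 ≤ p x y
  μ_pos : ∀ x, 0 < μ x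
  locallyFinite : ∀ x, {y | 0 < p x y}.Finite
  markov : ∀ x, HasSum (p x) 1
  connected : ∀ x y : V, ∃ n : ℕ, ∃ c : Fin (n + 1) → V,
      c 0 = x ∧ c (Fin.last n) = y ∧ ∀ i : Fin n, 0 < p (c i.castSucc) (c i.succ)

namespace WeightedGraph

variable {V : Type*} (G : WeightedGraph V)

/-- The Laplacian `Δ f (x) = ∑_{y ∼ x} p x y * (f y - f x)`.  (Summing over all
of `V` is the same, since `p x y = 0` unless `y ∼ x`.) -/
noncomputable def lap (f : V → ℝ) (x : V) : ℝ := ∑' y, G.p x y * (f y - f x)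

/-- The carré du champ `Γ f (x) = (1/2) ∑_{y ∼ x} p x y * (f y - f x)^2`. -/
noncomputable def gamma (f : V → ℝ) (x : V) : ℝ := (1 / 2) * ∑' y, G.p x y * (f y - f x) ^ 2

/-- The bilinear carré du champ
`Γ(f,g)(x) = (1/2) ∑_{y ∼ x} p x y * (f y - f x) * (g y - g x)`. -/
noncomputable def gammaBil (f g : V → ℝ) (x : V) : ℝ :=
  (1 / 2) * ∑' y, G.p x y * (f y - f x) * (g y - g x)

/-- The iterated carré du champ `Γ₂ f = (1/2) Δ (Γ f) - Γ(f, Δ f)`. -/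
noncomputable def gamma2 (f : V → ℝ) (x : V) : ℝ :=
  (1 / 2) * G.lap (G.gamma f) x - G.gammaBil f (G.lap f) x

/-- Bounded geometry with constant `α > 0`: the uniform ellipticity condition (A1)
`p x y ≥ α` whenever `x ∼ y`, and the reversibility condition (A2)
`p x y * μ x = p y x * μ y`. -/
def BoundedGeometry (α : ℝ) : Prop :=
  0 < α ∧ (∀ x y, 0 < G.p x y → α ≤ G.p x y) ∧ ∀ x y, G.p x y * G.μ x = G.p y x * G.μ y

/-- The Bakry–Émery curvature-dimension condition `CD(K, n)`:
`Γ₂ f ≥ (1/n) (Δ f)² + K Γ f`. -/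
def CD (K : ℝ) (n : ℕ) : Prop :=
  ∀ f : V → ℝ, ∀ x : V, (1 / (n : ℝ)) * G.lap f x ^ 2 + K * G.gamma f x ≤ G.gamma2 f x

/-- The Bakry–Émery curvature-dimension condition `CD(K, ∞)`: `Γ₂ f ≥ K Γ f`. -/
def CDInfty (K : ℝ) : Prop :=
  ∀ f : V → ℝ, ∀ x : V, K * G.gamma f x ≤ G.gamma2 f x

/-- The graph distance `d(x,y)`: the least length of a path of consecutive
neighbours joining `x` to `y` (and `0` if `x = y`). -/
noncomputable def dist (x y : V) : ℕ :=
  sInf {n : ℕ | ∃ c : Fin (n + 1) → V,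
    c 0 = x ∧ c (Fin.last n) = y ∧ ∀ i : Fin n, 0 < G.p (c i.castSucc) (c i.succ)}

/-- The measure `μ(B(x,r)) = ∑_{y : d(x,y) ≤ r} μ y` of the closed ball `B(x,r)`. -/
noncomputable def ballMeasure (x : V) (r : ℝ) : ℝ :=
  ∑' y : {y : V // (G.dist x y : ℝ) ≤ r}, G.μ y

end WeightedGraph

/-- The sup norm `‖f‖_∞ = sup_x |f x|` of a (bounded) function on `V`. -/
noncomputable def supNorm {V : Type*} (f : V → ℝ) : ℝ := ⨆ x, |f x|

/-- Every weighted graph satisfies `CD(-1, 2)`: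
`Γ₂ f(x) ≥ (1/2)(Δf(x))² - Γf(x)` for all `f` and `x`. -/
theorem CD_neg_one_two {V : Type*} [Countable V] (G : WeightedGraph V) :
    ∀ f : V → ℝ, ∀ x : V,
      (1 / 2) * (G.lap f x) ^ 2 + (-1) * G.gamma f x ≤ G.gamma2 f x := by
  intro f x
  classical
  have key : ∀ u : V, ∀ F : V → ℝ, (∀ y, G.p u y = 0 → F y = 0) →
      ∑' y, F y = ∑ y ∈ (G.locallyFinite u).toFinset, F y := by
    intro u F hF
    refine tsum_eq_sum fun y hy => hF y ?_
    by_contra h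
    exact hy ((G.locallyFinite u).mem_toFinset.mpr
      (lt_of_le_of_ne (G.p_nonneg u y) (Ne.symm h)))
  have hmark : ∀ u : V, ∑ y ∈ (G.locallyFinite u).toFinset, G.p u y = 1 := fun u => by
    rw [← key u (G.p u) fun y h => h]; exact (G.markov u).tsum_eq
  have hlap : ∀ u, G.lap f u
      = ∑ y ∈ (G.locallyFinite u).toFinset, G.p u y * (f y - f u) := fun u =>
    key u _ fun y h => by simp [h]
  have hgam : ∀ u, G.gamma f u
      = (1 / 2) * ∑ y ∈ (G.locallyFinite u).toFinset, G.p u y * (f y - f u) ^ 2 := fun u => by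
    unfold WeightedGraph.gamma
    rw [key u _ fun y h => by simp [h]]
  set sx := (G.locallyFinite x).toFinset with hsx
  -- pointwise nonnegativity of the remainder term
  have hinner : ∀ y : V,
      0 ≤ G.gamma f y - (f y - f x) * G.lap f y + (1 / 2) * (f y - f x) ^ 2 := by
    intro y
    have h1 : ∑ z ∈ (G.locallyFinite y).toFinset,
          G.p y z * ((1 / 2) * (f z - 2 * f y + f x) ^ 2)
        = (1 / 2) * (∑ z ∈ (G.locallyFinite y).toFinset, G.p y z * (f z - f y) ^ 2)
          - (f y - f x) * (∑ z ∈ (G.locallyFinite y).toFinset, G.p y z * (f z - f y))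
          + (1 / 2) * (f y - f x) ^ 2 * (∑ z ∈ (G.locallyFinite y).toFinset, G.p y z) := by
      rw [Finset.mul_sum, Finset.mul_sum, Finset.mul_sum, ← Finset.sum_sub_distrib,
        ← Finset.sum_add_distrib]
      exact Finset.sum_congr rfl fun z _ => by ring
    have h2 : G.gamma f y - (f y - f x) * G.lap f y + (1 / 2) * (f y - f x) ^ 2
        = ∑ z ∈ (G.locallyFinite y).toFinset,
            G.p y z * ((1 / 2) * (f z - 2 * f y + f x) ^ 2) := by
      rw [h1, hgam y, hlap y, hmark y]; ring
    rw [h2]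
    exact Finset.sum_nonneg fun z _ => mul_nonneg (G.p_nonneg y z) (by positivity)
  have hSnn : 0 ≤ ∑ y ∈ sx,
      G.p x y * (G.gamma f y - (f y - f x) * G.lap f y + (1 / 2) * (f y - f x) ^ 2) :=
    Finset.sum_nonneg fun y _ => mul_nonneg (G.p_nonneg x y) (hinner y)
  have hSsplit : ∑ y ∈ sx,
        G.p x y * (G.gamma f y - (f y - f x) * G.lap f y + (1 / 2) * (f y - f x) ^ 2)
      = (∑ y ∈ sx, G.p x y * G.gamma f y)
        - (∑ y ∈ sx, G.p x y * ((f y - f x) * G.lap f y))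
        + (1 / 2) * (∑ y ∈ sx, G.p x y * (f y - f x) ^ 2) := by
    rw [Finset.mul_sum, ← Finset.sum_sub_distrib, ← Finset.sum_add_distrib]
    exact Finset.sum_congr rfl fun y _ => by ring
  have e1 : G.lap (G.gamma f) x = (∑ y ∈ sx, G.p x y * G.gamma f y) - G.gamma f x := by
    have h3 : G.lap (G.gamma f) x
        = ∑ y ∈ sx, G.p x y * (G.gamma f y - G.gamma f x) :=
      key x _ fun y h => by simp [h]
    have h4 : ∑ y ∈ sx, G.p x y * (G.gamma f y - G.gamma f x)
        = (∑ y ∈ sx, G.p x y * G.gamma f y) - G.gamma f x * (∑ y ∈ sx, G.p x y) := by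
      rw [Finset.mul_sum, ← Finset.sum_sub_distrib]
      exact Finset.sum_congr rfl fun y _ => by ring
    rw [h3, h4, hmark x]; ring
  have e2 : G.gammaBil f (G.lap f) x
      = (1 / 2) * ((∑ y ∈ sx, G.p x y * ((f y - f x) * G.lap f y))
        - G.lap f x * (∑ y ∈ sx, G.p x y * (f y - f x))) := by
    have h3 : G.gammaBil f (G.lap f) x
        = (1 / 2) * ∑ y ∈ sx, G.p x y * (f y - f x) * (G.lap f y - G.lap f x) := by
      unfold WeightedGraph.gammaBil
      rw [key x _ fun y h => by simp [h]]
    have h4 : ∑ y ∈ sx, G.p x y * (f y - f x) * (G.lap f y - G.lap f x)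
        = (∑ y ∈ sx, G.p x y * ((f y - f x) * G.lap f y))
          - G.lap f x * (∑ y ∈ sx, G.p x y * (f y - f x)) := by
      rw [Finset.mul_sum, ← Finset.sum_sub_distrib]
      exact Finset.sum_congr rfl fun y _ => by ring
    rw [h3, h4]
  have e3 : G.lap f x = ∑ y ∈ sx, G.p x y * (f y - f x) := hlap x
  have e4 : G.gamma f x = (1 / 2) * ∑ y ∈ sx, G.p x y * (f y - f x) ^ 2 := hgam x
  rw [hSsplit] at hSnn
  unfold WeightedGraph.gamma2
  rw [e1, e2, e3, e4]
  nlinarith [hSnn]
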